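/- Let P be the transition function of a finite MC over finite nonempty state type S and let B, G ⊆ S be such that B ∩ G = ∅ and no state of B has a path to G under P. Then for every state s and every n : ℕ, Pr_P^n(s, G) + APr_P^n(s, B, G) ≤ 1; consequently Prob_P(s,G) ≤ 1 − AProb_P(s,B,G). -/
import Mathlib


open scoped Classical BigOperators

/-- `n`-step reachability probability `Pr_P^n(s, G)`. -/
noncomputable def Pr {S : Type*} [Fintype S] (P : S → S → ℝ) : ℕ → S → Set S → ℝ
  | 0, s, G => if s ∈ G then 1 else 0
  | n + 1, s, G => if s ∈ G then 1 else ∑ t, P s t * Pr P n t G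

/-- Reachability probability `Prob_P(s, G) = ⨆ n, Pr_P^n(s, G)`. -/
noncomputable def Prob {S : Type*} [Fintype S] (P : S → S → ℝ) (s : S) (G : Set S) : ℝ :=
  ⨆ n : ℕ, Pr P n s G

/-- `C`-restriction of `P`: states outside `C` are made absorbing. -/
noncomputable def restrictMC {S : Type*} (C : Set S) (P : S → S → ℝ) (s t : S) : ℝ :=
  if s ∈ C then P s t else (if t = s then 1 else 0)

/-- `n`-step probability of reaching `B` while avoiding `G`. -/
noncomputable def APr {S : Type*} [Fintype S] (P : S → S → ℝ) : ℕ → S → Set S → Set S → ℝ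
  | 0, s, B, _ => if s ∈ B then 1 else 0
  | n + 1, s, B, G => if s ∈ B then 1 else if s ∈ G then 0 else ∑ t, P s t * APr P n t B G

/-- `AProb_P(s, B, G) = ⨆ n, APr_P^n(s, B, G)`. -/
noncomputable def AProb {S : Type*} [Fintype S] (P : S → S → ℝ) (s : S) (B G : Set S) : ℝ :=
  ⨆ n : ℕ, APr P n s B G

/-- `s` has a path to `G` under `P`. -/
def HasPathTo {S : Type*} (P : S → S → ℝ) (s : S) (G : Set S) : Prop :=
  ∃ (m : ℕ) (u : ℕ → S), u 0 = s ∧ (∀ i < m, 0 < P (u i) (u (i + 1))) ∧ u m ∈ G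

/-- `B_P(G)`: the set of states with no path to `G` under `P`. -/
def BSet {S : Type*} (P : S → S → ℝ) (G : Set S) : Set S :=
  {s | ¬ HasPathTo P s G}

/-- Transition function `P_r` of the instantiated MC `D_r` of a family `𝔓`. -/
noncomputable def Pinst {S K : Type*} [Fintype K] (𝔓 : S → K → ℝ) (r : K → S) (s t : S) : ℝ :=
  ∑ k, if r k = t then 𝔓 s k else 0

/-- Parameter `k` occurs at some state of `C`. -/
def OccursIn {S K : Type*} (𝔓 : S → K → ℝ) (C : Set S) (k : K) : Prop :=
  ∃ s ∈ C, 0 < 𝔓 s k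

/-- `u` is reachable from `s0` under `P`. -/
def ReachableFrom {S : Type*} (P : S → S → ℝ) (s0 u : S) : Prop :=
  ∃ (m : ℕ) (v : ℕ → S), v 0 = s0 ∧ (∀ i < m, 0 < P (v i) (v (i + 1))) ∧ v m = u

section Aux
variable {S : Type*} [Fintype S] (P : S → S → ℝ)

lemma hasPathTo_step {s t : S} {G : Set S} (hst : 0 < P s t) (h : HasPathTo P t G) :
    HasPathTo P s G := by
  obtain ⟨m, u, hu0, hstep, hum⟩ := h
  refine ⟨m + 1, fun i => if i = 0 then s else u (i - 1), rfl, ?_, by simpa using hum⟩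
  intro i hi
  rcases Nat.eq_zero_or_pos i with rfl | hpos
  · simpa [hu0] using hst
  · have h1 : i ≠ 0 := hpos.ne'
    simp only [h1, if_false, Nat.add_sub_cancel, if_neg (Nat.succ_ne_zero _)]
    have : i - 1 < m := by omega
    simpa [Nat.sub_add_cancel hpos] using hstep (i - 1) this

lemma Pr_nonneg (hP0 : ∀ s t, 0 ≤ P s t) : ∀ n s (G : Set S), 0 ≤ Pr P n s G := by
  intro n
  induction n with
  | zero => intro s G; simp [Pr]; positivity
  | succ n ih =>
    intro s G
    simp only [Pr]
    split
    · norm_num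
    · exact Finset.sum_nonneg fun t _ => mul_nonneg (hP0 s t) (ih t G)

lemma APr_nonneg (hP0 : ∀ s t, 0 ≤ P s t) : ∀ n s (B G : Set S), 0 ≤ APr P n s B G := by
  intro n
  induction n with
  | zero => intro s B G; simp [APr]; positivity
  | succ n ih =>
    intro s B G
    simp only [APr]
    split
    · norm_num
    split
    · norm_num
    · exact Finset.sum_nonneg fun t _ => mul_nonneg (hP0 s t) (ih t B G)

lemma Pr_le_one (hP0 : ∀ s t, 0 ≤ P s t) (hP1 : ∀ s, ∑ t, P s t = 1) :
    ∀ n s (G : Set S), Pr P n s G ≤ 1 := by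
  intro n
  induction n with
  | zero => intro s G; simp [Pr]; split <;> norm_num
  | succ n ih =>
    intro s G
    simp only [Pr]
    split
    · norm_num
    · calc ∑ t, P s t * Pr P n t G ≤ ∑ t, P s t * 1 :=
            Finset.sum_le_sum fun t _ => mul_le_mul_of_nonneg_left (ih t G) (hP0 s t)
        _ = 1 := by simp [hP1 s]

lemma APr_le_one (hP0 : ∀ s t, 0 ≤ P s t) (hP1 : ∀ s, ∑ t, P s t = 1) :
    ∀ n s (B G : Set S), APr P n s B G ≤ 1 := by
  intro n
  induction n with
  | zero => intro s B G; simp [APr]; split <;> norm_num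
  | succ n ih =>
    intro s B G
    simp only [APr]
    split
    · norm_num
    split
    · norm_num
    · calc ∑ t, P s t * APr P n t B G ≤ ∑ t, P s t * 1 :=
            Finset.sum_le_sum fun t _ => mul_le_mul_of_nonneg_left (ih t B G) (hP0 s t)
        _ = 1 := by simp [hP1 s]

lemma Pr_zero_of_no_path (hP0 : ∀ s t, 0 ≤ P s t) {G : Set S} :
    ∀ n s, ¬ HasPathTo P s G → Pr P n s G = 0 := by
  intro n
  induction n with
  | zero =>
    intro s hs
    have hsG : s ∉ G := fun h => hs ⟨0, fun _ => s, rfl, by omega, h⟩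
    simp [Pr, hsG]
  | succ n ih =>
    intro s hs
    have hsG : s ∉ G := fun h => hs ⟨0, fun _ => s, rfl, by omega, h⟩
    simp only [Pr, if_neg hsG]
    refine Finset.sum_eq_zero fun t _ => ?_
    rcases lt_or_eq_of_le (hP0 s t) with hpos | heq
    · have : ¬ HasPathTo P t G := fun h => hs (hasPathTo_step P hpos h)
      rw [ih t this, mul_zero]
    · rw [← heq, zero_mul]

lemma Pr_mono (hP0 : ∀ s t, 0 ≤ P s t) {G : Set S} :
    ∀ n s, Pr P n s G ≤ Pr P (n + 1) s G := by
  intro n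
  induction n with
  | zero =>
    intro s
    simp only [Pr]
    split
    · exact le_refl 1
    · exact Finset.sum_nonneg fun t _ => mul_nonneg (hP0 s t) (Pr_nonneg P hP0 0 t G)
  | succ n ih =>
    intro s
    simp only [Pr]
    split
    · exact le_refl 1
    · exact Finset.sum_le_sum fun t _ => mul_le_mul_of_nonneg_left (ih t) (hP0 s t)

lemma APr_mono (hP0 : ∀ s t, 0 ≤ P s t) {B G : Set S} :
    ∀ n s, APr P n s B G ≤ APr P (n + 1) s B G := by
  intro n
  induction n with
  | zero =>
    intro s
    simp only [APr]
    split
    · exact le_refl 1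
    split
    · simp [APr]
    · exact Finset.sum_nonneg fun t _ => mul_nonneg (hP0 s t) (APr_nonneg P hP0 0 t B G)
  | succ n ih =>
    intro s
    simp only [APr]
    split
    · exact le_refl 1
    split
    · exact le_refl 0
    · exact Finset.sum_le_sum fun t _ => mul_le_mul_of_nonneg_left (ih t) (hP0 s t)

end Aux

/-- reach- and avoid-reach probabilities sum to at most one. -/
theorem stmt_12 {S : Type*} [Fintype S] [Nonempty S] (P : S → S → ℝ)
    (hP0 : ∀ s t, 0 ≤ P s t) (hP1 : ∀ s, ∑ t, P s t = 1)
    (B G : Set S) (hBG : B ∩ G = ∅) (hnopath : ∀ s ∈ B, ¬ HasPathTo P s G)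
    (s : S) (n : ℕ) :
    Pr P n s G + APr P n s B G ≤ 1 ∧
    Prob P s G ≤ 1 - AProb P s B G := by
  have key : ∀ n s, Pr P n s G + APr P n s B G ≤ 1 := by
    intro n
    induction n with
    | zero =>
      intro s
      by_cases hB : s ∈ B
      · have hG : s ∉ G := fun hG => by
          have : s ∈ B ∩ G := ⟨hB, hG⟩
          simp [hBG] at this
        simp [Pr, APr, hB, hG]
      · by_cases hG : s ∈ G <;> simp [Pr, APr, hB, hG]
    | succ n ih =>
      intro s
      by_cases hB : s ∈ B
      · have hG : s ∉ G := fun hG => by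
          have : s ∈ B ∩ G := ⟨hB, hG⟩
          simp [hBG] at this
        have hPr : Pr P (n + 1) s G = 0 := Pr_zero_of_no_path P hP0 (n + 1) s (hnopath s hB)
        rw [hPr]
        simpa using APr_le_one P hP0 hP1 (n + 1) s B G
      · by_cases hG : s ∈ G
        · simp [Pr, APr, hB, hG]
        · simp only [Pr, APr, if_neg hB, if_neg hG]
          calc (∑ t, P s t * Pr P n t G) + ∑ t, P s t * APr P n t B G
              = ∑ t, P s t * (Pr P n t G + APr P n t B G) := by
                rw [← Finset.sum_add_distrib]; congr 1; ext t; ring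
            _ ≤ ∑ t, P s t * 1 :=
                Finset.sum_le_sum fun t _ =>
                  mul_le_mul_of_nonneg_left (ih t) (hP0 s t)
            _ = 1 := by simp [hP1 s]
  refine ⟨key n s, ?_⟩
  have hPrmono : Monotone fun n => Pr P n s G :=
    monotone_nat_of_le_succ fun n => Pr_mono P hP0 n s
  have hAmono : ∀ t, Monotone fun n => APr P n t B G := fun t =>
    monotone_nat_of_le_succ fun n => APr_mono P hP0 n t
  refine ciSup_le fun n => ?_
  rw [le_sub_iff_add_le, add_comm, ← le_sub_iff_add_le]
  refine ciSup_le fun m => ?_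
  have h1 : APr P m s B G ≤ APr P (max n m) s B G := hAmono s (le_max_right n m)
  have h2 : Pr P n s G ≤ Pr P (max n m) s G := hPrmono (le_max_left n m)
  have := key (max n m) s
  linarith
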